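/- Let X be an infinite Hausdorff topological space. Then the properties α₂(Γ,Γ), α₃(Γ,Γ), α₄(Γ,Γ) and S₁(Γ,Γ) are all equivalent. -/

import Mathlib

open Set Filter Pointwise

universe u

/-- The selection principle `S₁(𝒜,ℬ)`: for each sequence of elements of `𝒜` one can pick one
element from each term so that the set of chosen elements belongs to `ℬ`. -/
def S1 {Y : Type u} (cA cB : Set (Set Y)) : Prop :=
  ∀ A : ℕ → Set Y, (∀ n, A n ∈ cA) →
    ∃ b : ℕ → Y, (∀ n, b n ∈ A n) ∧ Set.range b ∈ cB

/-- `α₁(𝒜,ℬ)`: for each sequence of infinite elements of `𝒜` there is `B ∈ ℬ` such that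
`Aₙ \ B` is finite for each `n`. -/
def Alpha1 {Y : Type u} (cA cB : Set (Set Y)) : Prop :=
  ∀ A : ℕ → Set Y, (∀ n, A n ∈ cA ∧ (A n).Infinite) →
    ∃ B ∈ cB, ∀ n, (A n \ B).Finite

/-- `α₂(𝒜,ℬ)`: for each sequence of infinite elements of `𝒜` there is `B ∈ ℬ` such that
`Aₙ ∩ B` is infinite for each `n`. -/
def Alpha2 {Y : Type u} (cA cB : Set (Set Y)) : Prop :=
  ∀ A : ℕ → Set Y, (∀ n, A n ∈ cA ∧ (A n).Infinite) →
    ∃ B ∈ cB, ∀ n, (A n ∩ B).Infinite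

/-- `α₃(𝒜,ℬ)`: for each sequence of infinite elements of `𝒜` there is `B ∈ ℬ` such that
`Aₙ ∩ B` is infinite for infinitely many `n`. -/
def Alpha3 {Y : Type u} (cA cB : Set (Set Y)) : Prop :=
  ∀ A : ℕ → Set Y, (∀ n, A n ∈ cA ∧ (A n).Infinite) →
    ∃ B ∈ cB, {n : ℕ | (A n ∩ B).Infinite}.Infinite

/-- `α₄(𝒜,ℬ)`: for each sequence of infinite elements of `𝒜` there is `B ∈ ℬ` such that
`Aₙ ∩ B` is nonempty for infinitely many `n`. -/
def Alpha4 {Y : Type u} (cA cB : Set (Set Y)) : Prop :=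
  ∀ A : ℕ → Set Y, (∀ n, A n ∈ cA ∧ (A n).Infinite) →
    ∃ B ∈ cB, {n : ℕ | (A n ∩ B).Nonempty}.Infinite

/-- An ω-cover: a nontrivial open cover such that every finite set lies in some member. -/
def IsOmegaCover {Y : Type u} [TopologicalSpace Y] (cU : Set (Set Y)) : Prop :=
  (∀ U ∈ cU, IsOpen U) ∧ ⋃₀ cU = Set.univ ∧ Set.univ ∉ cU ∧
    ∀ F : Set Y, F.Finite → ∃ U ∈ cU, F ⊆ U

/-- A k-cover: a nontrivial open cover such that every compact set lies in some member. -/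
def IsKCover {Y : Type u} [TopologicalSpace Y] (cU : Set (Set Y)) : Prop :=
  (∀ U ∈ cU, IsOpen U) ∧ ⋃₀ cU = Set.univ ∧ Set.univ ∉ cU ∧
    ∀ K : Set Y, IsCompact K → ∃ U ∈ cU, K ⊆ U

/-- A γ-cover: an infinite open cover such that each finite set is contained in all but
finitely many members. -/
def IsGammaCover {Y : Type u} [TopologicalSpace Y] (cU : Set (Set Y)) : Prop :=
  (∀ U ∈ cU, IsOpen U) ∧ ⋃₀ cU = Set.univ ∧ cU.Infinite ∧
    ∀ F : Set Y, F.Finite → {U ∈ cU | ¬ F ⊆ U}.Finite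

/-- A γₖ-cover: an infinite open cover such that each compact set is contained in all but
finitely many members. -/
def IsGammaKCover {Y : Type u} [TopologicalSpace Y] (cU : Set (Set Y)) : Prop :=
  (∀ U ∈ cU, IsOpen U) ∧ ⋃₀ cU = Set.univ ∧ cU.Infinite ∧
    ∀ K : Set Y, IsCompact K → {U ∈ cU | ¬ K ⊆ U}.Finite

/-- `Ω`: the collection of ω-covers of `Y`. -/
def OmegaCovers (Y : Type u) [TopologicalSpace Y] : Set (Set (Set Y)) :=
  {cU | IsOmegaCover cU}

/-- `𝒦`: the collection of k-covers of `Y`. -/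
def KCovers (Y : Type u) [TopologicalSpace Y] : Set (Set (Set Y)) :=
  {cU | IsKCover cU}

/-- `Γ`: the collection of γ-covers of `Y`. -/
def GammaCovers (Y : Type u) [TopologicalSpace Y] : Set (Set (Set Y)) :=
  {cU | IsGammaCover cU}

/-- `Γₖ`: the collection of γₖ-covers of `Y`. -/
def GammaKCovers (Y : Type u) [TopologicalSpace Y] : Set (Set (Set Y)) :=
  {cU | IsGammaKCover cU}

/-- `Y` is ω-Lindelöf if every ω-cover contains a countable ω-cover. -/
def OmegaLindelof (Y : Type u) [TopologicalSpace Y] : Prop :=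
  ∀ cU : Set (Set Y), IsOmegaCover cU →
    ∃ cV ⊆ cU, cV.Countable ∧ IsOmegaCover cV

/-- `Y` is k-Lindelöf if every k-cover contains a countable k-cover. -/
def KLindelof (Y : Type u) [TopologicalSpace Y] : Prop :=
  ∀ cU : Set (Set Y), IsKCover cU →
    ∃ cV ⊆ cU, cV.Countable ∧ IsKCover cV

/-- `Ω_y`: subsets of `Y \ {y}` having `y` in their closure. -/
def OmegaPt {Y : Type u} [TopologicalSpace Y] (y : Y) : Set (Set Y) :=
  {A | A ⊆ {y}ᶜ ∧ y ∈ closure A}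

/-- `Σ_y`: (ranges of) nontrivial sequences in `Y` converging to `y`. -/
def SigmaPt {Y : Type u} [TopologicalSpace Y] (y : Y) : Set (Set Y) :=
  {S | ∃ f : ℕ → Y, (∀ n, f n ≠ y) ∧
    Filter.Tendsto f Filter.atTop (nhds y) ∧ S = Set.range f}

/-- `2^X`: the hyperspace of closed subsets of `X`. -/
abbrev HClosed (X : Type u) [TopologicalSpace X] : Type u := {F : Set X // IsClosed F}

/-- The upper Fell topology on `2^X`, generated by the base
`{(Kᶜ)⁺ : K nonempty compact} ∪ {univ}`. -/
instance fellTopology (X : Type u) [TopologicalSpace X] : TopologicalSpace (HClosed X) :=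
  TopologicalSpace.generateFrom
    ({S | ∃ K : Set X, IsCompact K ∧ K.Nonempty ∧ S = {F : HClosed X | F.1 ⊆ Kᶜ}} ∪
      {Set.univ})

/-- `𝕂(X)`: the hyperspace of nonempty compact subsets of `X`. -/
abbrev KSp (X : Type u) [TopologicalSpace X] : Type u := {K : Set X // IsCompact K ∧ K.Nonempty}

/-- The upper Vietoris topology on `𝕂(X)`, generated by the base of sets `U⁺`, `U` open. -/
instance upperVietorisK (X : Type u) [TopologicalSpace X] : TopologicalSpace (KSp X) :=
  TopologicalSpace.generateFrom
    {S | ∃ U : Set X, IsOpen U ∧ S = {K : KSp X | K.1 ⊆ U}}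

/-- `𝔽(X)`: the hyperspace of nonempty finite subsets of `X`. -/
abbrev FSp (X : Type u) [TopologicalSpace X] : Type u := {F : Set X // F.Finite ∧ F.Nonempty}

/-- The upper Vietoris topology on `𝔽(X)`, generated by the base of sets `U⁺`, `U` open. -/
instance upperVietorisF (X : Type u) [TopologicalSpace X] : TopologicalSpace (FSp X) :=
  TopologicalSpace.generateFrom
    {S | ∃ U : Set X, IsOpen U ∧ S = {F : FSp X | F.1 ⊆ U}}

/-- For a topological group `G` with local base `Be` at the neutral element:
`Ω(e) = {ω(U) : U ∈ Be, no nonempty finite F with F·U = G}` where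
`ω(U) = {F·U : F nonempty finite}`. -/
def OmegaE {G : Type u} [Group G] (Be : Set (Set G)) : Set (Set (Set G)) :=
  {cU | ∃ U ∈ Be,
    (¬ ∃ F : Set G, F.Finite ∧ F.Nonempty ∧ F * U = Set.univ) ∧
    cU = {V | ∃ F : Set G, F.Finite ∧ F.Nonempty ∧ V = F * U}}

/-- For a topological group `G` with local base `Be` at the neutral element:
`𝒦(e) = {k(U) : U ∈ Be, no nonempty compact K with K·U = G}` where
`k(U) = {K·U : K nonempty compact}`. -/
def KcalE {G : Type u} [Group G] [TopologicalSpace G] (Be : Set (Set G)) :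
    Set (Set (Set G)) :=
  {cU | ∃ U ∈ Be,
    (¬ ∃ K : Set G, IsCompact K ∧ K.Nonempty ∧ K * U = Set.univ) ∧
    cU = {V | ∃ K : Set G, IsCompact K ∧ K.Nonempty ∧ V = K * U}}

/-- Player ONE has a winning strategy in the game `G₁(𝒜,ℬ)`: a strategy assigns to each finite
sequence of TWO's previous moves a member of `𝒜`; it is winning if for every play in which
TWO's moves follow it, the set of TWO's moves is not in `ℬ`. -/
def OneHasWinningStrategy {Y : Type u} (cA cB : Set (Set Y)) : Prop :=
  ∃ σ : List Y → Set Y, (∀ l : List Y, σ l ∈ cA) ∧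
    ∀ b : ℕ → Y, (∀ n, b n ∈ σ (List.ofFn fun i : Fin n => b i)) → Set.range b ∉ cB

section AuxStmt5

variable {X : Type u} [TopologicalSpace X]

lemma gammaCover_of {B : Set (Set X)} (hop : ∀ U ∈ B, IsOpen U) (hinf : B.Infinite)
    (hbad : ∀ F : Set X, F.Finite → {U ∈ B | ¬ F ⊆ U}.Finite) : IsGammaCover B := by
  refine ⟨hop, ?_, hinf, hbad⟩
  apply Set.eq_univ_of_forall
  intro x
  obtain ⟨U, hU⟩ := (hinf.diff (hbad {x} (Set.finite_singleton x))).nonempty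
  refine ⟨U, hU.1, ?_⟩
  by_contra hx
  exact hU.2 ⟨hU.1, fun h => hx (h rfl)⟩

lemma gammaCover_subset {B C : Set (Set X)} (hC : IsGammaCover C) (hBC : B ⊆ C)
    (hinf : B.Infinite) : IsGammaCover B :=
  gammaCover_of (fun U hU => hC.1 U (hBC hU)) hinf
    (fun F hF => (hC.2.2.2 F hF).subset (fun U hU => ⟨hBC hU.1, hU.2⟩))

lemma construction {U : ℕ → ℕ → Set X} (hinj : ∀ m, Function.Injective (U m))
    (hopen : ∀ m i, IsOpen (U m i))
    {W : ℕ → Set X} {nh ih : ℕ → ℕ}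
    (hnh : ∀ j, j ≤ nh j) (hih : ∀ j, j ≤ ih j)
    (hsub : ∀ j m, m ≤ nh j → W j ⊆ U m (ih j))
    (hWbad : ∀ F : Set X, F.Finite → {j | ¬ F ⊆ W j}.Finite) :
    ∃ B : Set (Set X), IsGammaCover B ∧ ∀ m, (Set.range (U m) ∩ B).Infinite := by
  set B : Set (Set X) := {P | ∃ j, ∃ m ≤ nh j, P = U m (ih j)} with hB
  have hSm : ∀ m, {P | ∃ j, m ≤ j ∧ P = U m (ih j)}.Infinite := by
    intro m
    have h1 : (ih '' Set.Ici m).Infinite := by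
      intro hfin
      obtain ⟨b, hb⟩ := hfin.bddAbove
      have : ih (max m (b+1)) ≤ b := hb ⟨max m (b+1), Set.mem_Ici.mpr (le_max_left _ _), rfl⟩
      have : b + 1 ≤ ih (max m (b+1)) := le_trans (le_max_right _ _) (hih _)
      omega
    have h2 := h1.image ((hinj m).injOn)
    apply h2.mono
    rintro P ⟨i, ⟨j, hj, rfl⟩, rfl⟩
    exact ⟨j, hj, rfl⟩
  have hSmB : ∀ m, {P | ∃ j, m ≤ j ∧ P = U m (ih j)} ⊆ Set.range (U m) ∩ B := by
    rintro m P ⟨j, hj, rfl⟩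
    exact ⟨⟨ih j, rfl⟩, j, m, le_trans hj (hnh j), rfl⟩
  have hBinf : B.Infinite := ((hSm 0).mono (hSmB 0)).mono (Set.inter_subset_right)
  have hBopen : ∀ P ∈ B, IsOpen P := by
    rintro P ⟨j, m, hm, rfl⟩
    exact hopen m (ih j)
  have hBbad : ∀ F : Set X, F.Finite → {P ∈ B | ¬ F ⊆ P}.Finite := by
    intro F hF
    have : {P ∈ B | ¬ F ⊆ P} ⊆ ⋃ j ∈ {j | ¬ F ⊆ W j}, (fun m => U m (ih j)) '' Set.Iic (nh j) := by
      rintro P ⟨⟨j, m, hm, rfl⟩, hbadP⟩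
      have hj : ¬ F ⊆ W j := fun hFW => hbadP (hFW.trans (hsub j m hm))
      exact Set.mem_biUnion hj ⟨m, hm, rfl⟩
    exact (Set.Finite.biUnion (hWbad F hF) (fun j _ => (Set.finite_Iic _).image _)).subset this
  exact ⟨B, gammaCover_of hBopen hBinf hBbad, fun m => ((hSm m).mono (hSmB m))⟩







lemma alpha4_to_alpha2 :
    Alpha4 (GammaCovers X) (GammaCovers X) → Alpha2 (GammaCovers X) (GammaCovers X) := by
  classical
  intro h4 A hA
  have hU : ∀ n, ∃ U : ℕ → Set X, Function.Injective U ∧ ∀ i, U i ∈ A n := by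
    intro n
    have hinf : (A n).Infinite := (hA n).2
    let f := Set.Infinite.natEmbedding (A n) hinf
    exact ⟨fun i => (f i : Set X),
      fun a b h => f.injective (Subtype.val_injective h),
      fun i => (f i).2⟩
  choose U hUinj hUmem using hU
  have hGA : ∀ n, IsGammaCover (A n) := fun n => (hA n).1
  have hopenU : ∀ n i, IsOpen (U n i) := fun n i => (hGA n).1 _ (hUmem n i)
  have hbadU : ∀ (n : ℕ) (F : Set X), F.Finite → {i | ¬ F ⊆ U n i}.Finite := by
    intro n F hF
    apply (((hGA n).2.2.2 F hF).preimage ((hUinj n).injOn)).subset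
    intro i hi
    exact ⟨hUmem n i, hi⟩
  set V : ℕ → ℕ → Set X := fun n i => ⋂ m ∈ Finset.range (n+1), U m i with hV
  have hVopen : ∀ n i, IsOpen (V n i) := fun n i => isOpen_biInter_finset (fun m _ => hopenU m i)
  have hVsub : ∀ n i m, m ≤ n → V n i ⊆ U m i := fun n i m hm =>
    Set.biInter_subset_of_mem (Finset.mem_range.mpr (Nat.lt_succ_of_le hm))
  have hbadV : ∀ (n : ℕ) (F : Set X), F.Finite → {i | ¬ F ⊆ V n i}.Finite := by
    intro n F hF
    have hsub : {i | ¬ F ⊆ V n i} ⊆ ⋃ m ∈ Finset.range (n+1), {i | ¬ F ⊆ U m i} := by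
      intro i hi
      simp only [Set.mem_setOf_eq, hV, Set.subset_iInter₂_iff] at hi
      push_neg at hi
      obtain ⟨m, hm, h⟩ := hi
      exact Set.mem_biUnion hm h
    exact (Set.Finite.biUnion (Finset.range (n+1)).finite_toSet
      (fun m _ => hbadU m F hF)).subset hsub
  set cB : ℕ → Set (Set X) := fun n => {P | ∃ i, n ≤ i ∧ P = V n i} with hcB
  have hcBopen : ∀ n, ∀ P ∈ cB n, IsOpen P := by
    rintro n P ⟨i, hi, rfl⟩
    exact hVopen n i
  have hcBbad : ∀ (n : ℕ) (F : Set X), F.Finite → {P ∈ cB n | ¬ F ⊆ P}.Finite := by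
    intro n F hF
    apply ((hbadV n F hF).image (V n)).subset
    rintro P ⟨⟨i, hi, rfl⟩, hP⟩
    exact ⟨i, hP, rfl⟩
  have hcBinf : ∀ n, (cB n).Infinite := by
    intro n
    by_contra hfin
    rw [Set.not_infinite] at hfin
    have hcov : Set.Ici n ⊆ ⋃ P ∈ cB n, {i | n ≤ i ∧ V n i = P} := by
      intro i hi
      exact Set.mem_biUnion (⟨i, hi, rfl⟩ : (V n i) ∈ cB n) ⟨hi, rfl⟩
    by_cases hall : ∀ P ∈ cB n, {i | n ≤ i ∧ V n i = P}.Finite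
    · exact Set.Ici_infinite n ((hfin.biUnion hall).subset hcov)
    · push_neg at hall
      obtain ⟨P, hPmem, hPinf⟩ := hall
      replace hPinf : {i | n ≤ i ∧ V n i = P}.Infinite := hPinf
      have hPuniv : P = Set.univ := by
        apply Set.eq_univ_of_forall
        intro x
        obtain ⟨i, hi⟩ := (hPinf.diff (hbadV n {x} (Set.finite_singleton x))).nonempty
        have hxV : {x} ⊆ V n i := by
          by_contra hc
          exact hi.2 hc
        rw [← hi.1.2]
        exact hxV rfl
      have key : ∀ i ∈ {i | n ≤ i ∧ V n i = P}, U 0 i = Set.univ := by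
        rintro i ⟨-, hiP⟩
        apply Set.eq_univ_of_univ_subset
        rw [← hPuniv, ← hiP]
        exact hVsub n i 0 (Nat.zero_le n)
      obtain ⟨i₁, hi₁, i₂, hi₂, hne⟩ := hPinf.nontrivial
      exact hne (hUinj 0 ((key i₁ hi₁).trans (key i₂ hi₂).symm))
  have hcBgamma : ∀ n, IsGammaCover (cB n) :=
    fun n => gammaCover_of (hcBopen n) (hcBinf n) (hcBbad n)
  set R : Set (Set X) := {P | {n | P ∈ cB n}.Infinite} with hR
  have finish : ∀ (W : ℕ → Set X) (nh ih : ℕ → ℕ), (∀ j, j ≤ nh j) → (∀ j, j ≤ ih j) →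
      (∀ j m, m ≤ nh j → W j ⊆ U m (ih j)) →
      (∀ F : Set X, F.Finite → {j | ¬ F ⊆ W j}.Finite) →
      ∃ B ∈ GammaCovers X, ∀ n, (A n ∩ B).Infinite := by
    intro W nh ih h1 h2 h3 h4'
    obtain ⟨B, hBg, hBinf⟩ := construction hUinj hopenU h1 h2 h3 h4'
    refine ⟨B, hBg, fun n => (hBinf n).mono ?_⟩
    rintro P ⟨⟨i, rfl⟩, hPB⟩
    exact ⟨hUmem n i, hPB⟩
  by_cases hcase : ∃ n₀, (cB n₀ ∩ R).Infinite
  · obtain ⟨n₀, hc⟩ := hcase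
    set e := Set.Infinite.natEmbedding _ hc with he
    have heWspec : ∀ j : ℕ, ∃ n i, j ≤ n ∧ n ≤ i ∧ (e j : Set X) = V n i := by
      intro j
      have hR' : {n | (e j : Set X) ∈ cB n}.Infinite := (e j).2.2
      obtain ⟨n, hn, hjn⟩ := hR'.exists_gt j
      obtain ⟨i, hi, hEq⟩ := hn
      exact ⟨n, i, le_of_lt hjn, hi, hEq⟩
    choose nh ih hjn hni hEq using heWspec
    apply finish (fun j => (e j : Set X)) nh ih hjn (fun j => le_trans (hjn j) (hni j))
      (fun j m hm => by
        show (e j : Set X) ⊆ U m (ih j)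
        rw [hEq j]
        exact hVsub (nh j) (ih j) m hm)
    intro F hF
    have hWinj : Function.Injective (fun j => (e j : Set X)) :=
      fun a b h => e.injective (Subtype.val_injective h)
    apply ((hcBbad n₀ F hF).preimage hWinj.injOn).subset
    intro j hj
    exact ⟨(e j).2.1, hj⟩
  · push_neg at hcase
    replace hcase : ∀ n, (cB n ∩ R).Finite := fun n => hcase n
    have hcB'inf : ∀ n, (cB n \ R).Infinite := by
      intro n
      have hEq : cB n \ R = cB n \ (cB n ∩ R) := by
        ext P
        simp only [Set.mem_diff, Set.mem_inter_iff]
        tauto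
      rw [hEq]
      exact (hcBinf n).diff (hcase n)
    have hcB'g : ∀ n, IsGammaCover (cB n \ R) :=
      fun n => gammaCover_subset (hcBgamma n) Set.diff_subset (hcB'inf n)
    obtain ⟨B, hBmem, hS⟩ := h4 (fun n => cB n \ R) (fun n => ⟨hcB'g n, hcB'inf n⟩)
    set S := {n | ((cB n \ R) ∩ B).Nonempty} with hSdef
    set Vsel : ℕ → Set X := fun n => if h : ((cB n \ R) ∩ B).Nonempty then h.choose else ∅
      with hVseldef
    have hVspec : ∀ n ∈ S, Vsel n ∈ (cB n \ R) ∩ B := by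
      intro n hn
      have hn' : ((cB n \ R) ∩ B).Nonempty := hn
      simp only [hVseldef, dif_pos hn']
      exact hn'.choose_spec
    have hImInf : (Vsel '' S).Infinite := by
      intro hfin
      have hcov : S ⊆ ⋃ P ∈ Vsel '' S, {n | P ∈ cB n} := by
        intro n hn
        exact Set.mem_biUnion (Set.mem_image_of_mem _ hn) (hVspec n hn).1.1
      have hfib : ∀ P ∈ Vsel '' S, {n | P ∈ cB n}.Finite := by
        rintro P ⟨n₁, hn₁, rfl⟩
        exact Set.not_infinite.mp (hVspec n₁ hn₁).1.2
      exact hS ((hfin.biUnion hfib).subset hcov)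
    set T := {n | n ∈ S ∧ ∀ n', n' ∈ S → Vsel n' = Vsel n → n ≤ n'} with hT
    have hTinjOn : Set.InjOn Vsel T := by
      intro a ha b hb hab
      exact le_antisymm (ha.2 b hb.1 hab.symm) (hb.2 a ha.1 hab)
    have hImT : Vsel '' S ⊆ Vsel '' T := by
      rintro P ⟨n₁, hn₁, rfl⟩
      have hex : ∃ n, n ∈ S ∧ Vsel n = Vsel n₁ := ⟨n₁, hn₁, rfl⟩
      refine ⟨Nat.find hex, ⟨(Nat.find_spec hex).1, ?_⟩, (Nat.find_spec hex).2⟩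
      intro n' hn' hEq
      exact Nat.find_min' hex ⟨hn', hEq.trans (Nat.find_spec hex).2⟩
    have hTinf : T.Infinite := by
      intro hfinT
      exact hImInf ((hfinT.image Vsel).subset hImT)
    have hnhT : ∀ j, Nat.nth (· ∈ T) j ∈ T := fun j => Nat.nth_mem_of_infinite hTinf j
    have hnhmono : StrictMono (Nat.nth (· ∈ T)) := Nat.nth_strictMono hTinf
    set nh : ℕ → ℕ := fun j => Nat.nth (· ∈ T) j with hnh
    have hjnh : ∀ j, j ≤ nh j := fun j => hnhmono.le_apply
    set W : ℕ → Set X := fun j => Vsel (nh j) with hW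
    have hWB : ∀ j, W j ∈ B := fun j => (hVspec (nh j) (hnhT j).1).2
    have hWcB : ∀ j, W j ∈ cB (nh j) := fun j => (hVspec (nh j) (hnhT j).1).1.1
    have hWinj : Function.Injective W := by
      intro a b hab
      exact hnhmono.injective (hTinjOn (hnhT a) (hnhT b) hab)
    have hspec : ∀ j, ∃ i, nh j ≤ i ∧ W j = V (nh j) i := fun j => hWcB j
    choose ih hnhi hEq using hspec
    apply finish W nh ih hjnh (fun j => le_trans (hjnh j) (hnhi j))
      (fun j m hm => by
        show W j ⊆ U m (ih j)
        rw [hEq j]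
        exact hVsub (nh j) (ih j) m hm)
    intro F hF
    have hBg : IsGammaCover B := hBmem
    apply ((hBg.2.2.2 F hF).preimage hWinj.injOn).subset
    intro j hj
    exact ⟨hWB j, hj⟩





lemma alpha2_to_alpha3 :
    Alpha2 (GammaCovers X) (GammaCovers X) → Alpha3 (GammaCovers X) (GammaCovers X) := by
  intro h A hA
  obtain ⟨B, hB, hAB⟩ := h A hA
  refine ⟨B, hB, ?_⟩
  have : {n : ℕ | (A n ∩ B).Infinite} = Set.univ := Set.eq_univ_of_forall (fun n => hAB n)
  rw [this]
  exact Set.infinite_univ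

lemma alpha3_to_alpha4 :
    Alpha3 (GammaCovers X) (GammaCovers X) → Alpha4 (GammaCovers X) (GammaCovers X) := by
  intro h A hA
  obtain ⟨B, hB, hAB⟩ := h A hA
  exact ⟨B, hB, hAB.mono (fun n hn => hn.nonempty)⟩

lemma s1_to_alpha4 :
    S1 (GammaCovers X) (GammaCovers X) → Alpha4 (GammaCovers X) (GammaCovers X) := by
  intro h A hA
  obtain ⟨b, hb, hr⟩ := h A (fun n => (hA n).1)
  refine ⟨Set.range b, hr, ?_⟩
  have : {n : ℕ | (A n ∩ Set.range b).Nonempty} = Set.univ :=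
    Set.eq_univ_of_forall (fun n => ⟨b n, hb n, Set.mem_range_self n⟩)
  rw [this]
  exact Set.infinite_univ

lemma alpha2_to_s1 :
    Alpha2 (GammaCovers X) (GammaCovers X) → S1 (GammaCovers X) (GammaCovers X) := by
  classical
  intro h2 A hA
  have hA' : ∀ n, A n ∈ GammaCovers X ∧ (A n).Infinite :=
    fun n => ⟨hA n, (hA n : IsGammaCover (A n)).2.2.1⟩
  obtain ⟨B, hB, hAB⟩ := h2 A hA'
  have hpick : ∀ (n : ℕ) (prev : Finset (Set X)), ((A n ∩ B) \ prev).Nonempty :=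
    fun n prev => ((hAB n).diff prev.finite_toSet).nonempty
  let step : ℕ → Finset (Set X) → Set X := fun n prev => (hpick n prev).choose
  have hstep : ∀ (n : ℕ) (prev : Finset (Set X)), step n prev ∈ (A n ∩ B) \ (prev : Set (Set X)) :=
    fun n prev => (hpick n prev).choose_spec
  let Fs : ℕ → Finset (Set X) := fun n => Nat.rec ∅ (fun m prev => insert (step m prev) prev) n
  let b : ℕ → Set X := fun n => step n (Fs n)
  have hFsucc : ∀ n, Fs (n+1) = insert (b n) (Fs n) := fun n => rfl
  have hmono : ∀ m n, m ≤ n → Fs m ⊆ Fs n := by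
    intro m n h
    induction n with
    | zero =>
      have : m = 0 := Nat.le_zero.mp h
      subst this
      exact subset_rfl
    | succ k ihk =>
      rcases Nat.le_succ_iff.mp h with h' | h'
      · exact (ihk h').trans (by rw [hFsucc]; exact Finset.subset_insert _ _)
      · subst h'
        exact subset_rfl
  have hbmem : ∀ m n, m < n → b m ∈ Fs n := by
    intro m n h
    apply hmono (m+1) n h
    rw [hFsucc]
    exact Finset.mem_insert_self _ _
  have hkey : ∀ m n, m < n → b m ≠ b n := by
    intro m n h hEq
    have hmem := Finset.mem_coe.mpr (hbmem m n h)
    rw [hEq] at hmem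
    exact (hstep n (Fs n)).2 hmem
  have hinj : Function.Injective b := by
    intro a c h
    rcases lt_trichotomy a c with h' | h' | h'
    · exact absurd h (hkey a c h')
    · exact h'
    · exact absurd h.symm (hkey c a h')
  refine ⟨b, fun n => (hstep n (Fs n)).1.1, ?_⟩
  have hsub : Set.range b ⊆ B := by
    rintro P ⟨n, rfl⟩
    exact (hstep n (Fs n)).1.2
  exact gammaCover_subset hB hsub (Set.infinite_range_of_injective hinj)

end AuxStmt5

/-- Theorem (α₂/α₃/α₄/S₁ for (Γ,Γ)). -/
theorem stmt5 (X : Type u) [TopologicalSpace X] [T2Space X] [Infinite X] :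
    [Alpha2 (GammaCovers X) (GammaCovers X),
     Alpha3 (GammaCovers X) (GammaCovers X),
     Alpha4 (GammaCovers X) (GammaCovers X),
     S1 (GammaCovers X) (GammaCovers X)].TFAE := by
  tfae_have 1 → 2 := alpha2_to_alpha3
  tfae_have 2 → 3 := alpha3_to_alpha4
  tfae_have 3 → 1 := alpha4_to_alpha2
  tfae_have 1 → 4 := alpha2_to_s1
  tfae_have 4 → 3 := s1_to_alpha4
  tfae_finish
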